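/- Let p, q ≥ 1, N = p + q, let (t_i, a_i)_{i=1}^r be a good parameter, and let λ ∈ ℤ^N be dominant, satisfying the matching condition ν = P ⊔ Q. Then every element of I occurs at least once in the multiset ν_{<j} ⊔ ν_{>j} (i.e., I ⊆ ν_{<j} ⊔ ν_{>j}). -/

import Mathlib

open Finset

/-- The multiset `P(λ) = {λ_i − (N−1)/2 + (p−i) : 1 ≤ i ≤ p}` of rationals,
for `N = p + q` and a weight `λ : ℕ → ℤ` (1-based indexing). -/
def Pms (p q : ℕ) (lam : ℕ → ℤ) : Multiset ℚ :=
  (Finset.Icc 1 p).val.map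
    (fun i => (lam i : ℚ) - ((p : ℚ) + (q : ℚ) - 1) / 2 + ((p : ℚ) - (i : ℚ)))

/-- The multiset `Q(λ) = {λ_{p+i} + (N−1)/2 − (i−1) : 1 ≤ i ≤ q}`. -/
def Qms (p q : ℕ) (lam : ℕ → ℤ) : Multiset ℚ :=
  (Finset.Icc 1 q).val.map
    (fun i => (lam (p + i) : ℚ) + ((p : ℚ) + (q : ℚ) - 1) / 2 - ((i : ℚ) - 1))

/-- Dominance: `λ_1 ≥ … ≥ λ_p` and `λ_{p+1} ≥ … ≥ λ_{p+q}`. -/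
def Dominant (p q : ℕ) (lam : ℕ → ℤ) : Prop :=
  (∀ i, 1 ≤ i → i < p → lam (i + 1) ≤ lam i) ∧
  (∀ i, p + 1 ≤ i → i < p + q → lam (i + 1) ≤ lam i)

/-- `p' = #{i : 1 ≤ i ≤ p, λ_i = λ_p}`. -/
def pPrime (p : ℕ) (lam : ℕ → ℤ) : ℕ :=
  ((Finset.Icc 1 p).filter (fun i => lam i = lam p)).card

/-- `q' = #{i : p+1 ≤ i ≤ p+q, λ_i = λ_{p+1}}`. -/
def qPrime (p q : ℕ) (lam : ℕ → ℤ) : ℕ :=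
  ((Finset.Icc (p + 1) (p + q)).filter (fun i => lam i = lam (p + 1))).card

/-- The segment `P' = {λ_p − (N−1)/2 + k : 0 ≤ k ≤ p'−1}`. -/
def Pseg (p q : ℕ) (lam : ℕ → ℤ) : Finset ℚ :=
  (Finset.range (pPrime p lam)).image
    (fun k : ℕ => (lam p : ℚ) - ((p : ℚ) + (q : ℚ) - 1) / 2 + (k : ℚ))

/-- The segment `Q' = {λ_{p+1} + (N−1)/2 − k : 0 ≤ k ≤ q'−1}`. -/
def Qseg (p q : ℕ) (lam : ℕ → ℤ) : Finset ℚ :=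
  (Finset.range (qPrime p q lam)).image
    (fun k : ℕ => (lam (p + 1) : ℚ) + ((p : ℚ) + (q : ℚ) - 1) / 2 - (k : ℚ))

/-- `I = P' ∩ Q'`. -/
def Iseg (p q : ℕ) (lam : ℕ → ℤ) : Finset ℚ := Pseg p q lam ∩ Qseg p q lam

/-- A good parameter `(t_1,a_1),…,(t_r,a_r)` for `U(p,q)` (1-based indexing). -/
structure GoodParam (p q r : ℕ) (t : ℕ → ℤ) (a : ℕ → ℕ) : Prop where
  hr : 1 ≤ r
  hpos : ∀ i ∈ Finset.Icc 1 r, 0 < a i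
  hsum : ∑ i ∈ Finset.Icc 1 r, a i = p + q
  heven : ∀ i ∈ Finset.Icc 1 r, Even (t i + (a i : ℤ) + (p : ℤ) + (q : ℤ))
  hdec : ∀ i, 1 ≤ i → i < r → t (i + 1) ≤ t i
  hadec : ∀ i, 1 ≤ i → i < r → t i = t (i + 1) → a (i + 1) ≤ a i

/-- The segment `ν_i = {(t_i − a_i + 1)/2 + k : 0 ≤ k ≤ a_i − 1}` as a multiset of rationals. -/
def nu (t : ℕ → ℤ) (a : ℕ → ℕ) (i : ℕ) : Multiset ℚ :=
  (Multiset.range (a i)).map (fun k => ((t i : ℚ) - (a i : ℚ) + 1) / 2 + (k : ℚ))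

/-- `ν_{<j} = ν_1 ⊔ … ⊔ ν_{j−1}`. -/
def nuLt (t : ℕ → ℤ) (a : ℕ → ℕ) (j : ℕ) : Multiset ℚ :=
  ∑ k ∈ Finset.Icc 1 (j - 1), nu t a k

/-- `ν_{>j} = ν_{j+1} ⊔ … ⊔ ν_r`. -/
def nuGt (t : ℕ → ℤ) (a : ℕ → ℕ) (r j : ℕ) : Multiset ℚ :=
  ∑ k ∈ Finset.Icc (j + 1) r, nu t a k

/-- `ν = ν_1 ⊔ … ⊔ ν_r`. -/
def nuAll (t : ℕ → ℤ) (a : ℕ → ℕ) (r : ℕ) : Multiset ℚ :=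
  ∑ k ∈ Finset.Icc 1 r, nu t a k

/-- `j` is the least index with `a_1 + … + a_j ≥ p`. -/
structure LeastJ (p r : ℕ) (a : ℕ → ℕ) (j : ℕ) : Prop where
  h1 : 1 ≤ j
  hle : j ≤ r
  hge : p ≤ ∑ ℓ ∈ Finset.Icc 1 j, a ℓ
  hmin : ∀ i, i < j → ∑ ℓ ∈ Finset.Icc 1 i, a ℓ < p

/-- `p_j = p − (a_1 + … + a_{j−1})`. -/
def pj (p : ℕ) (a : ℕ → ℕ) (j : ℕ) : ℕ := p - ∑ ℓ ∈ Finset.Icc 1 (j - 1), a ℓ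

/-- `q_j = q − (a_{j+1} + … + a_r)`. -/
def qj (q r : ℕ) (a : ℕ → ℕ) (j : ℕ) : ℕ := q - ∑ ℓ ∈ Finset.Icc (j + 1) r, a ℓ

/-- The nonvanishing condition: `ν_{<j}` and `ν_{>j}` are multiplicity free,
`#(ν_j ∩ ν_{<j}) ≤ q_j` and `#(ν_j ∩ ν_{>j}) ≤ p_j`. -/
def NonVanishing (p q r : ℕ) (t : ℕ → ℤ) (a : ℕ → ℕ) (j : ℕ) : Prop :=
  (nuLt t a j).Nodup ∧ (nuGt t a r j).Nodup ∧
  Multiset.card ((nu t a j).filter (fun x => x ∈ nuLt t a j)) ≤ qj q r a j ∧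
  Multiset.card ((nu t a j).filter (fun x => x ∈ nuGt t a r j)) ≤ pj p a j


lemma mono_aux (lam : ℕ → ℤ) (a b : ℕ)
    (h : ∀ i, a ≤ i → i < b → lam (i + 1) ≤ lam i) :
    ∀ i i', a ≤ i → i ≤ i' → i' ≤ b → lam i' ≤ lam i := by
  intro i i' hai hii' hi'b
  induction i' with
  | zero => have : i = 0 := by omega
            simp [this]
  | succ n ih =>
    rcases Nat.eq_or_lt_of_le hii' with heq | hlt
    · rw [heq]
    · exact le_trans (h n (by omega) (by omega)) (ih (by omega) (by omega))

lemma pPrime_le (p : ℕ) (lam : ℕ → ℤ) : pPrime p lam ≤ p := by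
  have := Finset.card_filter_le (Finset.Icc 1 p) (fun i => lam i = lam p)
  simpa [pPrime] using this

lemma qPrime_le (p q : ℕ) (lam : ℕ → ℤ) : qPrime p q lam ≤ q := by
  have := Finset.card_filter_le (Finset.Icc (p+1) (p+q)) (fun i => lam i = lam (p+1))
  simpa [qPrime] using this

lemma lam_eq_of_lt_pPrime (p q : ℕ) (hp : 1 ≤ p) (lam : ℕ → ℤ)
    (hdom : Dominant p q lam) (k : ℕ) (hk : k < pPrime p lam) :
    lam (p - k) = lam p := by
  have hkp : k < p := lt_of_lt_of_le hk (pPrime_le p lam)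
  have hmono := mono_aux lam 1 p hdom.1
  have h1 : lam p ≤ lam (p - k) := hmono (p - k) p (by omega) (by omega) le_rfl
  by_contra hne
  have hlt : lam p < lam (p - k) := lt_of_le_of_ne h1 (fun h => hne h.symm)
  have hsub : (Finset.Icc 1 p).filter (fun i => lam i = lam p) ⊆
      Finset.Icc (p - k + 1) p := by
    intro i hi
    simp only [Finset.mem_filter, Finset.mem_Icc] at hi ⊢
    refine ⟨?_, hi.1.2⟩
    by_contra hle
    have hile : i ≤ p - k := by omega
    have := hmono i (p - k) hi.1.1 hile (by omega)
    omega
  have hcard := Finset.card_le_card hsub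
  rw [Nat.card_Icc] at hcard
  have : pPrime p lam ≤ k := by
    unfold pPrime; omega
  omega

lemma lam_eq_of_lt_qPrime (p q : ℕ) (hq : 1 ≤ q) (lam : ℕ → ℤ)
    (hdom : Dominant p q lam) (k : ℕ) (hk : k < qPrime p q lam) :
    lam (p + 1 + k) = lam (p + 1) := by
  have hkq : k < q := lt_of_lt_of_le hk (qPrime_le p q lam)
  have hmono := mono_aux lam (p + 1) (p + q) hdom.2
  have h1 : lam (p + 1 + k) ≤ lam (p + 1) :=
    hmono (p + 1) (p + 1 + k) le_rfl (by omega) (by omega)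
  by_contra hne
  have hlt : lam (p + 1 + k) < lam (p + 1) := lt_of_le_of_ne h1 hne
  have hsub : (Finset.Icc (p + 1) (p + q)).filter (fun i => lam i = lam (p + 1)) ⊆
      Finset.Icc (p + 1) (p + k) := by
    intro i hi
    simp only [Finset.mem_filter, Finset.mem_Icc] at hi ⊢
    refine ⟨hi.1.1, ?_⟩
    by_contra hle
    have := hmono (p + 1 + k) i (by omega) (by omega) hi.1.2
    omega
  have hcard := Finset.card_le_card hsub
  rw [Nat.card_Icc] at hcard
  have : qPrime p q lam ≤ k := by
    unfold qPrime; omega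
  omega

lemma Pseg_sub (p q : ℕ) (hp : 1 ≤ p) (lam : ℕ → ℤ) (hdom : Dominant p q lam) :
    ∀ x ∈ Pseg p q lam, x ∈ Pms p q lam := by
  intro x hx
  simp only [Pseg, Finset.mem_image, Finset.mem_range] at hx
  obtain ⟨k, hk, hxe⟩ := hx
  have hkp : k < p := lt_of_lt_of_le hk (pPrime_le p lam)
  have hlam := lam_eq_of_lt_pPrime p q hp lam hdom k hk
  simp only [Pms, Multiset.mem_map, Finset.mem_val, Finset.mem_Icc]
  refine ⟨p - k, ⟨by omega, by omega⟩, ?_⟩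
  rw [hlam, ← hxe]
  have : ((p - k : ℕ) : ℚ) = (p : ℚ) - (k : ℚ) := by
    push_cast [Nat.cast_sub (le_of_lt hkp)]; ring
  rw [this]; ring

lemma Qseg_sub (p q : ℕ) (hq : 1 ≤ q) (lam : ℕ → ℤ) (hdom : Dominant p q lam) :
    ∀ x ∈ Qseg p q lam, x ∈ Qms p q lam := by
  intro x hx
  simp only [Qseg, Finset.mem_image, Finset.mem_range] at hx
  obtain ⟨k, hk, hxe⟩ := hx
  have hkq : k < q := lt_of_lt_of_le hk (qPrime_le p q lam)
  have hlam := lam_eq_of_lt_qPrime p q hq lam hdom k hk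
  simp only [Qms, Multiset.mem_map, Finset.mem_val, Finset.mem_Icc]
  refine ⟨k + 1, ⟨by omega, by omega⟩, ?_⟩
  have hpk : p + (k + 1) = p + 1 + k := by omega
  rw [hpk, hlam, ← hxe]
  push_cast
  ring

lemma nu_nodup (t : ℕ → ℤ) (a : ℕ → ℕ) (i : ℕ) : (nu t a i).Nodup := by
  unfold nu
  have h : (do let x ← Multiset.range (a i); pure ((x : ℚ)) : Multiset ℚ)
      = (Multiset.range (a i)).map (fun k : ℕ => (k : ℚ)) := by
    simp [Multiset.bind_singleton]
  rw [h, Multiset.map_map]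
  refine Multiset.Nodup.map ?_ (Multiset.nodup_range _)
  intro k1 k2 hk
  simp only [Function.comp] at hk
  have h2 : (k1 : ℚ) = (k2 : ℚ) := by linarith
  exact_mod_cast h2

lemma nuAll_split (t : ℕ → ℤ) (a : ℕ → ℕ) (r j : ℕ) (h1 : 1 ≤ j) (hjr : j ≤ r) :
    nuAll t a r = nuLt t a j + nu t a j + nuGt t a r j := by
  unfold nuAll nuLt nuGt
  have e0 : Finset.Icc 1 r = Finset.Ioc 0 r := by rw [← Finset.Icc_add_one_left_eq_Ioc]; rfl
  have e1 : Finset.Icc 1 (j - 1) = Finset.Ioc 0 (j - 1) := by rw [← Finset.Icc_add_one_left_eq_Ioc]; rfl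
  have e2 : Finset.Icc (j + 1) r = Finset.Ioc j r := by rw [← Finset.Icc_add_one_left_eq_Ioc]
  rw [e0, e1, e2]
  rw [← Finset.sum_Ioc_consecutive (f := nu t a) (show (0:ℕ) ≤ j by omega) hjr]
  congr 1
  have : j = (j - 1) + 1 := by omega
  rw [this, Finset.sum_Ioc_succ_top (by omega)]
  rw [← this]

/-- under the matching condition `ν = P ⊔ Q`, every element of `I` occurs
in the multiset `ν_{<j} ⊔ ν_{>j}`. -/
theorem statement5 (p q r j : ℕ) (hp : 1 ≤ p) (hq : 1 ≤ q) (t : ℕ → ℤ) (a : ℕ → ℕ)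
    (hgp : GoodParam p q r t a) (hj : LeastJ p r a j)
    (lam : ℕ → ℤ) (hdom : Dominant p q lam)
    (hmatch : nuAll t a r = Pms p q lam + Qms p q lam) :
    ∀ x ∈ Iseg p q lam, x ∈ nuLt t a j + nuGt t a r j := by
  intro x hx
  rw [Iseg, Finset.mem_inter] at hx
  have hP : x ∈ Pms p q lam := Pseg_sub p q hp lam hdom x hx.1
  have hQ : x ∈ Qms p q lam := Qseg_sub p q hq lam hdom x hx.2
  have hc2 : 2 ≤ Multiset.count x (nuAll t a r) := by
    rw [hmatch, Multiset.count_add]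
    have h1 := Multiset.one_le_count_iff_mem.mpr hP
    have h2 := Multiset.one_le_count_iff_mem.mpr hQ
    omega
  have hsplit := nuAll_split t a r j hj.h1 hj.hle
  rw [hsplit] at hc2
  simp only [Multiset.count_add] at hc2
  have hcj : Multiset.count x (nu t a j) ≤ 1 :=
    Multiset.nodup_iff_count_le_one.mp (nu_nodup t a j) x
  rw [← Multiset.one_le_count_iff_mem, Multiset.count_add]
  omega
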